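/- The automorphism group of the random graph has the finite algebraic closure property: for every finite S ⊆ V, the set of vertices b ∈ V whose orbit under the pointwise stabilizer Aut(R)_(S) is finite equals S itself (in particular, it is finite). -/

import Mathlib

/-- The defining extension property of the random (Rado) graph. -/
def ExtensionProperty {V : Type*} (G : SimpleGraph V) : Prop :=
  ∀ A B : Finset V, Disjoint A B →
    ∃ v : V, (∀ a ∈ A, G.Adj a v) ∧ (∀ b ∈ B, ¬ G.Adj b v)

section Aux

variable {V : Type*}

/-- The set of witnesses for a pair of disjoint finite sets is infinite. -/
lemma witness_infinite (G : SimpleGraph V) (hG : ExtensionProperty G)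
    (A B : Finset V) (hAB : Disjoint A B) :
    {v | (∀ a ∈ A, G.Adj a v) ∧ ∀ b ∈ B, ¬ G.Adj b v}.Infinite := by
  classical
  by_contra hfin
  rw [Set.not_infinite] at hfin
  set W := hfin.toFinset with hW
  have ht : ∀ w : V, ∃ t, ∀ a ∈ ({w} : Finset V) ∪ A ∪ (W \ B), G.Adj a t := by
    intro w
    obtain ⟨t, h1, _⟩ := hG (({w} : Finset V) ∪ A ∪ (W \ B)) ∅ (Finset.disjoint_empty_right _)
    exact ⟨t, h1⟩
  choose t htt using ht
  set T := (W ∩ B).image t with hT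
  have hTadj : ∀ x ∈ T, ∀ a ∈ A ∪ (W \ B), G.Adj a x := by
    intro x hx a ha
    obtain ⟨w, hw, rfl⟩ := Finset.mem_image.mp hx
    refine htt w a ?_
    simp only [Finset.mem_union, Finset.mem_singleton] at ha ⊢
    tauto
  have hdisj : Disjoint (A ∪ (W \ B)) (B ∪ T) := by
    rw [Finset.disjoint_left]
    intro x hx hx'
    rcases Finset.mem_union.mp hx' with hB | hT'
    · rcases Finset.mem_union.mp hx with hA | hWB
      · exact (Finset.disjoint_left.mp hAB hA) hB
      · exact (Finset.mem_sdiff.mp hWB).2 hB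
    · exact G.irrefl (hTadj x hT' x hx)
  obtain ⟨v, hv1, hv2⟩ := hG _ _ hdisj
  have hvW : v ∈ W := by
    rw [hW, Set.Finite.mem_toFinset]
    exact ⟨fun a ha => hv1 a (Finset.mem_union_left _ ha),
           fun b hb => hv2 b (Finset.mem_union_left _ hb)⟩
  have hvB : v ∈ B := by
    by_contra hvB
    exact G.irrefl (hv1 v (Finset.mem_union_right _ (Finset.mem_sdiff.mpr ⟨hvW, hvB⟩)))
  have htv : t v ∈ T := Finset.mem_image_of_mem t (Finset.mem_inter.mpr ⟨hvW, hvB⟩)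
  exact hv2 (t v) (Finset.mem_union_right _ htv)
    (G.adj_symm (htt v v (by simp)))

/-- Finite partial isomorphisms of a graph, as finite sets of pairs. -/
def IsPIso (G : SimpleGraph V) (f : Finset (V × V)) : Prop :=
  ∀ p ∈ f, ∀ q ∈ f, (p.1 = q.1 ↔ p.2 = q.2) ∧ (G.Adj p.1 q.1 ↔ G.Adj p.2 q.2)

lemma IsPIso.swap [DecidableEq V] {G : SimpleGraph V} {f : Finset (V × V)}
    (hf : IsPIso G f) : IsPIso G (f.image Prod.swap) := by
  intro p hp q hq
  obtain ⟨p', hp', rfl⟩ := Finset.mem_image.mp hp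
  obtain ⟨q', hq', rfl⟩ := Finset.mem_image.mp hq
  obtain ⟨h1, h2⟩ := hf p' hp' q' hq'
  exact ⟨h1.symm, h2.symm⟩

/-- Any finite partial isomorphism can be extended to include `a` in its domain. -/
lemma IsPIso.extend_left {G : SimpleGraph V} (hG : ExtensionProperty G)
    {f : Finset (V × V)} (hf : IsPIso G f) (a : V) :
    ∃ g : Finset (V × V), IsPIso G g ∧ f ⊆ g ∧ ∃ w, (a, w) ∈ g := by
  classical
  by_cases ha : ∃ w, (a, w) ∈ f
  · exact ⟨f, hf, Finset.Subset.refl f, ha⟩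
  push_neg at ha
  set A := (f.filter (fun p => G.Adj p.1 a)).image Prod.snd with hA
  set B := (f.filter (fun p => ¬ G.Adj p.1 a)).image Prod.snd with hB
  have hABd : Disjoint A B := by
    rw [Finset.disjoint_left]
    rintro x hx hx'
    obtain ⟨p, hp, rfl⟩ := Finset.mem_image.mp hx
    obtain ⟨q, hq, hqx⟩ := Finset.mem_image.mp hx'
    rw [Finset.mem_filter] at hp hq
    have := ((hf p hp.1 q hq.1).1).mpr hqx.symm
    exact hq.2 (this ▸ hp.2)
  have hWinf := (witness_infinite G hG A B hABd).diff (f.image Prod.snd).finite_toSet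
  obtain ⟨w, ⟨⟨hw1, hw2⟩, hwr⟩⟩ := hWinf.nonempty
  have hwr' : ∀ q ∈ f, w ≠ q.2 := by
    intro q hq hwq
    exact hwr (Finset.mem_coe.mpr (Finset.mem_image.mpr ⟨q, hq, hwq.symm⟩))
  have key : ∀ q ∈ f, (G.Adj a q.1 ↔ G.Adj w q.2) := by
    intro q hq
    by_cases h : G.Adj q.1 a
    · have : q.2 ∈ A := Finset.mem_image_of_mem _ (Finset.mem_filter.mpr ⟨hq, h⟩)
      exact ⟨fun _ => G.adj_symm (hw1 _ this), fun _ => G.adj_symm h⟩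
    · have : q.2 ∈ B := Finset.mem_image_of_mem _ (Finset.mem_filter.mpr ⟨hq, h⟩)
      exact ⟨fun h' => absurd (G.adj_symm h') h, fun h' => absurd (G.adj_symm h') (hw2 _ this)⟩
  refine ⟨insert (a, w) f, ?_, Finset.subset_insert _ _, w, Finset.mem_insert_self _ _⟩
  intro p hp q hq
  rcases Finset.mem_insert.mp hp with rfl | hp' <;>
    rcases Finset.mem_insert.mp hq with rfl | hq'
  · exact ⟨by simp, iff_of_false (G.irrefl) (G.irrefl)⟩
  · constructor
    · constructor
      · intro h
        have hq2 : (a, q.2) = q := Prod.ext h rfl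
        exact absurd (show (a, q.2) ∈ f by rwa [hq2]) fun hm => ha q.2 hm
      · intro h
        exact absurd h (hwr' q hq')
    · exact key q hq'
  · constructor
    · constructor
      · intro h
        have hp2 : (a, p.2) = p := Prod.ext h.symm rfl
        exact absurd (show (a, p.2) ∈ f by rwa [hp2]) fun hm => ha p.2 hm
      · intro h
        exact absurd h.symm (hwr' p hp')
    · simpa [G.adj_comm] using key p hp'
  · exact hf p hp' q hq'

lemma IsPIso.extend_right [DecidableEq V] {G : SimpleGraph V} (hG : ExtensionProperty G)
    {f : Finset (V × V)} (hf : IsPIso G f) (b : V) :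
    ∃ g : Finset (V × V), IsPIso G g ∧ f ⊆ g ∧ ∃ a, (a, b) ∈ g := by
  classical
  obtain ⟨g', hg', hsub, a, hab⟩ := IsPIso.extend_left hG hf.swap b
  refine ⟨g'.image Prod.swap, hg'.swap, ?_, a, ?_⟩
  · intro p hp
    have hps : p.swap ∈ g' := hsub (Finset.mem_image_of_mem _ hp)
    simpa using Finset.mem_image_of_mem Prod.swap hps
  · exact Finset.mem_image_of_mem Prod.swap hab

/-- Back-and-forth: any finite partial isomorphism of a countable graph with the
extension property extends to an automorphism. -/
lemma exists_auto [Countable V] (G : SimpleGraph V) (hG : ExtensionProperty G)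
    (f₀ : Finset (V × V)) (h₀ : IsPIso G f₀) :
    ∃ g : G ≃g G, ∀ p ∈ f₀, g p.1 = p.2 := by
  classical
  haveI : Encodable V := Encodable.ofCountable V
  let P := {f : Finset (V × V) // IsPIso G f}
  let D : V ⊕ V → Order.Cofinal P := fun i =>
    match i with
    | Sum.inl a =>
      ⟨{f | ∃ w, (a, w) ∈ f.1}, fun f => by
        obtain ⟨g, hg, hsub, hw⟩ := IsPIso.extend_left hG f.2 a
        exact ⟨⟨g, hg⟩, hw, hsub⟩⟩
    | Sum.inr b =>
      ⟨{f | ∃ a, (a, b) ∈ f.1}, fun f => by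
        obtain ⟨g, hg, hsub, hw⟩ := IsPIso.extend_right hG f.2 b
        exact ⟨⟨g, hg⟩, hw, hsub⟩⟩
  let seq : ℕ → P := Order.sequenceOfCofinals ⟨f₀, h₀⟩ D
  have hmono : Monotone seq := Order.sequenceOfCofinals.monotone _ _
  have hcompat : ∀ {m n : ℕ} {p q : V × V}, p ∈ (seq m).1 → q ∈ (seq n).1 →
      (p.1 = q.1 ↔ p.2 = q.2) ∧ (G.Adj p.1 q.1 ↔ G.Adj p.2 q.2) := by
    intro m n p q hp hq
    have hp' : p ∈ (seq (max m n)).1 := hmono (le_max_left m n) hp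
    have hq' : q ∈ (seq (max m n)).1 := hmono (le_max_right m n) hq
    exact (seq (max m n)).2 p hp' q hq'
  have hleft : ∀ a : V, ∃ w, ∃ n, (a, w) ∈ (seq n).1 := by
    intro a
    obtain ⟨w, hw⟩ := Order.sequenceOfCofinals.encode_mem ⟨f₀, h₀⟩ D (Sum.inl a)
    exact ⟨w, _, hw⟩
  have hright : ∀ b : V, ∃ a, ∃ n, (a, b) ∈ (seq n).1 := by
    intro b
    obtain ⟨a, ha⟩ := Order.sequenceOfCofinals.encode_mem ⟨f₀, h₀⟩ D (Sum.inr b)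
    exact ⟨a, _, ha⟩
  choose gf hgf using hleft
  choose gb hgb using hright
  have left_inv : Function.LeftInverse gb gf := by
    intro a
    obtain ⟨n, hn⟩ := hgf a
    obtain ⟨m, hm⟩ := hgb (gf a)
    exact (hcompat hm hn).1.mpr rfl
  have right_inv : Function.RightInverse gb gf := by
    intro b
    obtain ⟨n, hn⟩ := hgb b
    obtain ⟨m, hm⟩ := hgf (gb b)
    exact (hcompat hm hn).1.mp rfl
  refine ⟨⟨⟨gf, gb, left_inv, right_inv⟩, ?_⟩, ?_⟩
  · intro a b
    obtain ⟨n, hn⟩ := hgf a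
    obtain ⟨m, hm⟩ := hgf b
    exact (hcompat hn hm).2.symm
  · intro p hp
    obtain ⟨n, hn⟩ := hgf p.1
    have h0 : p ∈ (seq 0).1 := hp
    exact (hcompat hn h0).1.mp rfl

end Aux

/-- `Aut(R)` has the finite algebraic closure property: for finite `S ⊆ V`, the set of
vertices with finite orbit under the pointwise stabilizer of `S` equals `S` itself. -/
theorem facp_random_graph {V : Type*} [Countable V] [Infinite V]
    (G : SimpleGraph V) (hG : ExtensionProperty G) (S : Finset V) :
    {b : V | {w : V | ∃ g : G ≃g G, (∀ x ∈ S, g x = x) ∧ g b = w}.Finite} = ↑S := by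
  classical
  ext b
  simp only [Set.mem_setOf_eq, Finset.mem_coe]
  constructor
  · intro hfin
    by_contra hbS
    -- the orbit of b contains all witnesses outside S, hence is infinite
    set A := S.filter (fun s => G.Adj s b) with hA
    set B := S.filter (fun s => ¬ G.Adj s b) with hB
    have hABd : Disjoint A B := Finset.disjoint_filter_filter_not S S _
    have hWinf := (witness_infinite G hG A B hABd).diff S.finite_toSet
    refine (hWinf.mono ?_) hfin
    rintro v ⟨⟨hv1, hv2⟩, hvS'⟩
    have hvS : v ∉ S := fun h => hvS' (by simpa using h)
    -- build the partial isomorphism fixing S and sending b to v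
    set f₀ : Finset (V × V) := insert (b, v) (S.image fun s => (s, s)) with hf₀
    have hsb : ∀ s ∈ S, (G.Adj s b ↔ G.Adj s v) := by
      intro s hs
      by_cases h : G.Adj s b
      · exact ⟨fun _ => hv1 s (Finset.mem_filter.mpr ⟨hs, h⟩), fun _ => h⟩
      · exact ⟨fun h' => absurd h' h, fun h' => absurd h' (hv2 s (Finset.mem_filter.mpr ⟨hs, h⟩))⟩
    have h₀ : IsPIso G f₀ := by
      intro p hp q hq
      rcases Finset.mem_insert.mp hp with rfl | hp' <;>
        rcases Finset.mem_insert.mp hq with rfl | hq'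
      · exact ⟨by simp, iff_of_false (G.irrefl) (G.irrefl)⟩
      · obtain ⟨s, hs, rfl⟩ := Finset.mem_image.mp hq'
        exact ⟨⟨fun h => absurd (by rw [show b = s from h]; exact hs : b ∈ S) hbS,
            fun h => absurd (by rw [show v = s from h]; exact hs : v ∈ S) hvS⟩,
          by simpa [G.adj_comm] using hsb s hs⟩
      · obtain ⟨s, hs, rfl⟩ := Finset.mem_image.mp hp'
        exact ⟨⟨fun h => absurd (by rw [← show s = b from h]; exact hs : b ∈ S) hbS,
            fun h => absurd (by rw [← show s = v from h]; exact hs : v ∈ S) hvS⟩, hsb s hs⟩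
      · obtain ⟨s, hs, rfl⟩ := Finset.mem_image.mp hp'
        obtain ⟨s', hs', rfl⟩ := Finset.mem_image.mp hq'
        exact ⟨Iff.rfl, Iff.rfl⟩
    obtain ⟨g, hg⟩ := exists_auto G hG f₀ h₀
    refine ⟨g, fun x hx => ?_, ?_⟩
    · exact hg (x, x) (Finset.mem_insert_of_mem (Finset.mem_image_of_mem _ hx))
    · exact hg (b, v) (Finset.mem_insert_self _ _)
  · intro hbS
    apply Set.Finite.subset (Set.finite_singleton b)
    rintro w ⟨g, hgS, hgb⟩
    simp only [Set.mem_singleton_iff]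
    rw [← hgb, hgS b hbS]
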